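/- Let f ∈ C¹(ℝ) be bounded with bounded derivative, let f̂ be its Engquist–Osher flux, let F be the antiderivative of f with F(0) = 0, and let k ∈ L^∞(ℝ) ∩ BV(ℝ) with cell averages k_{j+1/2} = (1/Δx)∫_{x_j}^{x_{j+1}} k(x) dx. Let (u_j)_{j∈ℤ} be real numbers with a′ ≤ u_j ≤ b′ for all j, where a′ ≤ 0 ≤ b′, and u_j = 0 for all |j| sufficiently large. Define the sign-adapted numerical flux h_{j+1/2} = k_{j+1/2} f̂(u_j, u_{j+1}) if k_{j+1/2} ≥ 0 and h_{j+1/2} = k_{j+1/2} f̂(u_{j+1}, u_j) if k_{j+1/2} < 0. Then Δx Σ_{j∈ℤ} u_j · D₋h_{j+1/2} ≥ − max_{s∈[a′,b′]} |F(s)| · Σ_{j∈ℤ} |k_{j+1/2} − k_{j−1/2}|, and in particular the left-hand side is bounded below by −max_{s∈[a′,b′]}|F(s)| · TV(k), where TV(k) denotes the total variation of k. -/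

import Mathlib

open MeasureTheory Filter Set

noncomputable section

/-- The sup-norm `‖g‖_∞` of a function `g : ℝ → ℝ`. -/
def supNorm (g : ℝ → ℝ) : ℝ := ⨆ x, |g x|

/-- The total variation `TV(k)` of a function `k : ℝ → ℝ`. -/
def totalVar (k : ℝ → ℝ) : ℝ := (eVariationOn k Set.univ).toReal

/-- The Engquist–Osher numerical flux associated to `f`. -/
def eoFlux (f : ℝ → ℝ) (u v : ℝ) : ℝ :=
  (f u + f v) / 2 - (∫ s in u..v, |deriv f s|) / 2

/-- The cell averages `k_{j+1/2} = (1/Δx) ∫_{x_j}^{x_{j+1}} k`. -/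
def kAvg (k : ℝ → ℝ) (dx : ℝ) (j : ℤ) : ℝ :=
  (1 / dx) * ∫ x in ((j : ℝ) * dx)..((j : ℝ) * dx + dx), k x

/-- The sign-adapted Engquist–Osher flux `f̂_{j+1/2}`, with arguments transposed when the
coefficient `kh j` is negative. -/
def signFlux (f : ℝ → ℝ) (kh : ℤ → ℝ) (v : ℤ → ℝ) (j : ℤ) : ℝ :=
  if 0 ≤ kh j then eoFlux f (v j) (v (j + 1)) else eoFlux f (v (j + 1)) (v j)

/-- The numerical flux `h_{j+1/2} = k_{j+1/2} f̂_{j+1/2}`. -/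
def numFlux (f k : ℝ → ℝ) (dx : ℝ) (v : ℤ → ℝ) (j : ℤ) : ℝ :=
  kAvg k dx j * signFlux f (kAvg k dx) v j

/-- Backward difference `D₋v_j = (v_j - v_{j-1})/Δx`. -/
def Dm (dx : ℝ) (v : ℤ → ℝ) (j : ℤ) : ℝ := (v j - v (j - 1)) / dx

/-- Forward difference `D₊v_j = (v_{j+1} - v_j)/Δx`. -/
def Dp (dx : ℝ) (v : ℤ → ℝ) (j : ℤ) : ℝ := (v (j + 1) - v j) / dx

/-- The square of the discrete `ℓ²` norm: `‖v‖² = Δx Σ_j v_j²`. -/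
def l2sq (dx : ℝ) (v : ℤ → ℝ) : ℝ := dx * ∑' j : ℤ, (v j) ^ 2

/-- The fully-discrete capillarity scheme
`D₊ᵗu^n_j + D₋h^n_{j+1/2} = βΔx·D₊D₋u^n_j + γμ(Δx)·D₊ᵗD₊D₋u^n_j`
with initial data the cell averages of `u0`. -/
def capScheme (f k u0 : ℝ → ℝ) (β γ μ dx dt : ℝ) (u : ℕ → ℤ → ℝ) : Prop :=
  (∀ j : ℤ, u 0 j =
      (1 / dx) * ∫ x in ((j : ℝ) * dx - dx / 2)..((j : ℝ) * dx + dx / 2), u0 x) ∧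
  ∀ (n : ℕ) (j : ℤ),
    (u (n + 1) j - u n j) / dt + Dm dx (numFlux f k dx (u n)) j
      = β * dx * Dp dx (Dm dx (u n)) j
        + γ * μ * ((Dp dx (Dm dx (u (n + 1))) j - Dp dx (Dm dx (u n)) j) / dt)

/-- The fully-discrete diffusive–dispersive scheme
`D₊ᵗu^n_j + D₋h^n_{j+1/2} = βΔx·D₊D₋u^n_j + γμ(Δx)·D₊D₋D₋u^n_j`
with initial data the cell averages of `u0`. -/
def ddScheme (f k u0 : ℝ → ℝ) (β γ μ dx dt : ℝ) (u : ℕ → ℤ → ℝ) : Prop :=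
  (∀ j : ℤ, u 0 j =
      (1 / dx) * ∫ x in ((j : ℝ) * dx - dx / 2)..((j : ℝ) * dx + dx / 2), u0 x) ∧
  ∀ (n : ℕ) (j : ℤ),
    (u (n + 1) j - u n j) / dt + Dm dx (numFlux f k dx (u n)) j
      = β * dx * Dp dx (Dm dx (u n)) j
        + γ * μ * Dp dx (Dm dx (Dm dx (u n))) j

/-- The CFL condition for the capillarity scheme. -/
def cflCap (f k : ℝ → ℝ) (β γ μ dx dt δ : ℝ) : Prop :=
  max (2 * max (supNorm f) (max (supNorm (deriv f)) (supNorm k)) + (dt / dx) / 2)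
      ((dt / dx) / 2 * (1 + β * dx ^ 2 / (γ * μ)))
    ≤ min (1 - δ) (β - δ)

/-- The explicit CFL condition for the diffusive–dispersive scheme. -/
def cflDD (f k : ℝ → ℝ) (β γ μ dx dt δ : ℝ) : Prop :=
  max (2 * (dt / dx) * (β ^ 2 * dx ^ 2 / (γ * μ) + 2 * γ * μ / dx ^ 2))
      (8 * (dt / dx) * supNorm k ^ 2 * supNorm (deriv f) ^ 2)
    ≤ min (1 - δ) (β - δ)

/-- The piecewise-constant interpolant `u_{Δx}(x,t) = u^n_j` on
`[x_{j-1/2}, x_{j+1/2}) × [t^n, t^{n+1})`. -/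
def pcInterp (dx dt : ℝ) (u : ℕ → ℤ → ℝ) (p : ℝ × ℝ) : ℝ :=
  u (⌊p.2 / dt⌋.toNat) ⌊p.1 / dx + 1 / 2⌋

/-- Finite support of the grid function at each time level. -/
def finSupp (u : ℕ → ℤ → ℝ) : Prop :=
  ∀ n : ℕ, ∃ J : ℕ, ∀ j : ℤ, (J : ℤ) < |j| → u n j = 0

/-- The `i`-th open interval of the partition of `ℝ` induced by the points `ξ 0 < ⋯ < ξ (M-1)`. -/
def pieceSet (M : ℕ) (ξ : Fin M → ℝ) (i : Fin (M + 1)) : Set ℝ :=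
  {x | (∀ m : Fin M, (m : ℕ) < (i : ℕ) → ξ m < x) ∧ (∀ m : Fin M, (i : ℕ) ≤ (m : ℕ) → x < ξ m)}

/-- `k` is piecewise Lipschitz: on each piece of the partition induced by `ξ`, it agrees with a
globally Lipschitz function (in particular it is Lipschitz on the closure of each piece, up to
redefining it at the partition points). -/
def piecewiseLip (M : ℕ) (ξ : Fin M → ℝ) (k : ℝ → ℝ) : Prop :=
  ∀ i : Fin (M + 1), ∃ (κ : ℝ → ℝ) (L : NNReal),
    LipschitzWith L κ ∧ ∀ x ∈ pieceSet M ξ i, k x = κ x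

end


section Aux

open intervalIntegral MeasureTheory

/-- Trapezoid-type two-sided bound. -/
private lemma flb_trap (f : ℝ → ℝ) (hf : ContDiff ℝ 1 f) {u v : ℝ} (huv : u ≤ v) :
    |(∫ s in u..v, f s) - (v - u) * ((f u + f v) / 2)|
      ≤ (v - u) / 2 * ∫ s in u..v, |deriv f s| := by
  have hfc : Continuous f := hf.continuous
  have hf' : Continuous (deriv f) := hf.continuous_deriv le_rfl
  have hdiff : Differentiable ℝ f := hf.differentiable one_ne_zero
  set A := ∫ s in u..v, |deriv f s| with hA
  have key : ∀ s ∈ Set.Icc u v, |f s - (f u + f v) / 2| ≤ A / 2 := by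
    intro s hs
    have h1 : f s - f u = ∫ t in u..s, deriv f t := by
      rw [integral_deriv_eq_sub (fun x _ => hdiff x) (hf'.intervalIntegrable _ _)]
    have h2 : f v - f s = ∫ t in s..v, deriv f t := by
      rw [integral_deriv_eq_sub (fun x _ => hdiff x) (hf'.intervalIntegrable _ _)]
    have hAdd : (∫ t in u..s, |deriv f t|) + ∫ t in s..v, |deriv f t| = A := by
      rw [hA]
      exact integral_add_adjacent_intervals ((hf'.abs).intervalIntegrable _ _)
        ((hf'.abs).intervalIntegrable _ _)
    have e1 : |f s - f u| ≤ ∫ t in u..s, |deriv f t| := by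
      rw [h1]; exact abs_integral_le_integral_abs hs.1
    have e2 : |f v - f s| ≤ ∫ t in s..v, |deriv f t| := by
      rw [h2]; exact abs_integral_le_integral_abs hs.2
    have hrw : f s - (f u + f v) / 2 = ((f s - f u) - (f v - f s)) / 2 := by ring
    rw [hrw, abs_div, abs_two]
    calc |(f s - f u) - (f v - f s)| / 2 ≤ (|f s - f u| + |f v - f s|) / 2 := by
          exact div_le_div_of_nonneg_right ((abs_sub _ _).trans (by rfl)) (by norm_num)
      _ ≤ A / 2 := by
          rw [← hAdd]
          exact div_le_div_of_nonneg_right (add_le_add e1 e2) (by norm_num)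
  set c := (f u + f v) / 2 with hc
  have h1 : (∫ s in u..v, f s) - (v - u) * c = ∫ s in u..v, (f s - c) := by
    rw [integral_sub (hfc.intervalIntegrable _ _) (intervalIntegrable_const),
      intervalIntegral.integral_const, smul_eq_mul]
  rw [h1]
  calc |∫ s in u..v, (f s - c)| ≤ ∫ s in u..v, |f s - c| :=
        abs_integral_le_integral_abs huv
    _ ≤ ∫ _s in u..v, (A / 2) := by
        apply integral_mono_on huv ((hfc.sub continuous_const).abs.intervalIntegrable _ _)
          intervalIntegrable_const
        exact key
    _ = (v - u) / 2 * A := by rw [intervalIntegral.integral_const, smul_eq_mul]; ring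

private lemma flb_eo_le (f F : ℝ → ℝ) (hf : ContDiff ℝ 1 f)
    (hF : ∀ x, HasDerivAt F (f x) x) (u v : ℝ) :
    (v - u) * eoFlux f u v ≤ F v - F u := by
  have hfc := hf.continuous
  have hFTC : ∀ a b : ℝ, (∫ s in a..b, f s) = F b - F a := fun a b =>
    integral_eq_sub_of_hasDerivAt (fun x _ => hF x) (hfc.intervalIntegrable _ _)
  rcases le_total u v with h | h
  · have ht := flb_trap f hf h
    rw [hFTC u v] at ht
    obtain ⟨h1, h2⟩ := abs_le.1 ht
    unfold eoFlux
    set A := ∫ s in u..v, |deriv f s|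
    nlinarith [h1]
  · have ht := flb_trap f hf h
    rw [hFTC v u] at ht
    obtain ⟨h1, h2⟩ := abs_le.1 ht
    unfold eoFlux
    have hsym : (∫ s in u..v, |deriv f s|) = -∫ s in v..u, |deriv f s| :=
      integral_symm v u
    rw [hsym]
    set B := ∫ s in v..u, |deriv f s|
    nlinarith [h2]

private lemma flb_eo_ge (f F : ℝ → ℝ) (hf : ContDiff ℝ 1 f)
    (hF : ∀ x, HasDerivAt F (f x) x) (u v : ℝ) :
    F v - F u ≤ (v - u) * eoFlux f v u := by
  have hfc := hf.continuous
  have hFTC : ∀ a b : ℝ, (∫ s in a..b, f s) = F b - F a := fun a b =>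
    integral_eq_sub_of_hasDerivAt (fun x _ => hF x) (hfc.intervalIntegrable _ _)
  rcases le_total u v with h | h
  · have ht := flb_trap f hf h
    rw [hFTC u v] at ht
    obtain ⟨h1, h2⟩ := abs_le.1 ht
    unfold eoFlux
    have hsym : (∫ s in v..u, |deriv f s|) = -∫ s in u..v, |deriv f s| :=
      integral_symm u v
    rw [hsym]
    set A := ∫ s in u..v, |deriv f s|
    nlinarith [h2]
  · have ht := flb_trap f hf h
    rw [hFTC v u] at ht
    obtain ⟨h1, h2⟩ := abs_le.1 ht
    unfold eoFlux
    set B := ∫ s in v..u, |deriv f s|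
    nlinarith [h1]

private lemma flb_sum_abs_le_tv (k : ℝ → ℝ) (hkBV : BoundedVariationOn k Set.univ)
    (n : ℕ) (p : ℕ → ℝ) (hp : Monotone p) :
    ∑ i ∈ Finset.range n, |k (p (i+1)) - k (p i)| ≤ totalVar k := by
  have h := eVariationOn.sum_le (f := k) (n := n) hp (fun i => Set.mem_univ (p i))
  calc ∑ i ∈ Finset.range n, |k (p (i+1)) - k (p i)|
      = (∑ i ∈ Finset.range n, edist (k (p (i+1))) (k (p i))).toReal := by
        rw [ENNReal.toReal_sum (fun a _ => edist_ne_top _ _)]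
        refine Finset.sum_congr rfl fun i _ => ?_
        rw [edist_dist, ENNReal.toReal_ofReal dist_nonneg, Real.dist_eq]
    _ ≤ totalVar k := ENNReal.toReal_mono hkBV h

private lemma flb_intIkt {k : ℝ → ℝ} (hkloc : LocallyIntegrable k volume) (a b c : ℝ) :
    IntervalIntegrable (fun y => k (y + c)) volume a b := by
  simpa using (((hkloc.integrableOn_isCompact (isCompact_uIcc
    (a := a + c) (b := b + c))).intervalIntegrable).comp_add_right c)

private lemma flb_kAvg_diff {k : ℝ → ℝ} {dx : ℝ} (hkloc : LocallyIntegrable k volume) (j : ℤ) :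
    kAvg k dx j - kAvg k dx (j - 1)
      = (1 / dx) * ∫ y in (0:ℝ)..dx,
          (k (y + (j : ℝ) * dx) - k (y + ((j : ℝ) - 1) * dx)) := by
  have h1 : ∀ c : ℝ, (∫ y in (0:ℝ)..dx, k (y + c)) = ∫ x in c..(c + dx), k x := by
    intro c
    rw [integral_comp_add_right]
    norm_num [add_comm]
  rw [intervalIntegral.integral_sub (flb_intIkt hkloc _ _ _) (flb_intIkt hkloc _ _ _), h1, h1]
  have hc : ((j - 1 : ℤ) : ℝ) = (j : ℝ) - 1 := by push_cast; ring
  unfold kAvg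
  rw [hc]
  ring

private lemma flb_ptwise {k : ℝ → ℝ} {dx : ℝ} (hdx : 0 < dx)
    (hkBV : BoundedVariationOn k Set.univ) (a b : ℤ) (y : ℝ) :
    ∑ j ∈ Finset.Icc a b, |k (y + (j : ℝ) * dx) - k (y + ((j : ℝ) - 1) * dx)|
      ≤ totalVar k := by
  set n := (b - a + 1).toNat with hn
  set p : ℕ → ℝ := fun i => y + ((a : ℝ) - 1 + i) * dx with hp
  have hmono : Monotone p := by
    intro i i' hii
    simp only [hp]
    have : ((i : ℝ)) ≤ (i' : ℝ) := by exact_mod_cast hii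
    nlinarith
  have key : ∑ j ∈ Finset.Icc a b, |k (y + (j : ℝ) * dx) - k (y + ((j : ℝ) - 1) * dx)|
      = ∑ i ∈ Finset.range n, |k (p (i+1)) - k (p i)| := by
    apply Finset.sum_nbij' (i := fun j => (j - a).toNat) (j := fun i => a + i)
    · intro j hj
      simp only [Finset.mem_Icc] at hj
      simp only [Finset.mem_range]
      omega
    · intro i hi
      simp only [Finset.mem_range] at hi
      simp only [Finset.mem_Icc]
      omega
    · intro j hj
      simp only [Finset.mem_Icc] at hj
      omega
    · intro i hi
      simp only [Finset.mem_range] at hi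
      omega
    · intro j hj
      simp only [Finset.mem_Icc] at hj
      have hcast : (((j - a).toNat : ℝ)) = (j : ℝ) - a := by
        have h1 : ((j - a).toNat : ℤ) = j - a := by omega
        exact_mod_cast congrArg (Int.cast : ℤ → ℝ) h1
      have e1 : p ((j - a).toNat + 1) = y + (j : ℝ) * dx := by
        simp only [hp]
        push_cast
        rw [hcast]
        ring
      have e2 : p ((j - a).toNat) = y + ((j : ℝ) - 1) * dx := by
        simp only [hp]
        rw [hcast]
        ring
      rw [e1, e2]
  rw [key]
  exact flb_sum_abs_le_tv k hkBV n p hmono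

private lemma flb_tv_nonneg (k : ℝ → ℝ) : 0 ≤ totalVar k := ENNReal.toReal_nonneg

private lemma flb_sum_kavg_le {k : ℝ → ℝ} {dx : ℝ} (hdx : 0 < dx)
    (hkBV : BoundedVariationOn k Set.univ) (hkloc : LocallyIntegrable k volume)
    (s : Finset ℤ) :
    ∑ j ∈ s, |kAvg k dx j - kAvg k dx (j - 1)| ≤ totalVar k := by
  rcases s.eq_empty_or_nonempty with rfl | hne
  · simpa using flb_tv_nonneg k
  set a := s.min' hne
  set b := s.max' hne
  have hsub : s ⊆ Finset.Icc a b := fun j hj =>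
    Finset.mem_Icc.2 ⟨s.min'_le j hj, s.le_max' j hj⟩
  have h0 : ∑ j ∈ s, |kAvg k dx j - kAvg k dx (j - 1)|
      ≤ ∑ j ∈ Finset.Icc a b, |kAvg k dx j - kAvg k dx (j - 1)| :=
    Finset.sum_le_sum_of_subset_of_nonneg hsub (fun _ _ _ => abs_nonneg _)
  refine h0.trans ?_
  set d : ℤ → ℝ → ℝ := fun j y => k (y + (j : ℝ) * dx) - k (y + ((j : ℝ) - 1) * dx) with hd
  have hint : ∀ j : ℤ, IntervalIntegrable (d j) volume 0 dx := fun j =>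
    (flb_intIkt hkloc _ _ _).sub (flb_intIkt hkloc _ _ _)
  have step1 : ∀ j : ℤ, |kAvg k dx j - kAvg k dx (j - 1)|
      ≤ (1 / dx) * ∫ y in (0:ℝ)..dx, |d j y| := by
    intro j
    rw [flb_kAvg_diff hkloc j, abs_mul, abs_of_pos (by positivity : (0:ℝ) < 1/dx)]
    exact mul_le_mul_of_nonneg_left
      (intervalIntegral.abs_integral_le_integral_abs hdx.le) (by positivity)
  calc ∑ j ∈ Finset.Icc a b, |kAvg k dx j - kAvg k dx (j - 1)|
      ≤ ∑ j ∈ Finset.Icc a b, (1 / dx) * ∫ y in (0:ℝ)..dx, |d j y| :=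
        Finset.sum_le_sum fun j _ => step1 j
    _ = (1 / dx) * ∫ y in (0:ℝ)..dx, ∑ j ∈ Finset.Icc a b, |d j y| := by
        rw [← Finset.mul_sum, intervalIntegral.integral_finset_sum
          (fun j _ => (hint j).abs)]
    _ ≤ (1 / dx) * ∫ _y in (0:ℝ)..dx, totalVar k := by
        apply mul_le_mul_of_nonneg_left ?_ (by positivity)
        have hsumint : IntervalIntegrable (fun y => ∑ j ∈ Finset.Icc a b, |d j y|)
            volume 0 dx := by
          have hI := IntervalIntegrable.sum (μ := volume) (Finset.Icc a b)
            (f := fun j => fun y => |d j y|) (fun j _ => (hint j).abs)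
          convert hI using 1
          · rfl
          ext y
          simp
        apply intervalIntegral.integral_mono_on hdx.le hsumint intervalIntegrable_const
        intro y _
        exact flb_ptwise hdx hkBV a b y
    _ = totalVar k := by
        rw [intervalIntegral.integral_const, smul_eq_mul]
        field_simp
        ring

end Aux

/-- discrete lower bound for the flux term `Δx Σ_j u_j D₋h_{j+1/2}` in terms of the
maximum of `|F|` on `[a',b']` and the variation of the cell averages of `k`, respectively the
total variation of `k`. -/
theorem flux_term_lower_bound (f F k : ℝ → ℝ) (u : ℤ → ℝ) (dx a' b' : ℝ)
    (hdx : 0 < dx)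
    (hf : ContDiff ℝ 1 f)
    (hfb : ∃ C, ∀ x, |f x| ≤ C)
    (hf'b : ∃ C, ∀ x, |deriv f x| ≤ C)
    (hF : ∀ x, HasDerivAt F (f x) x) (hF0 : F 0 = 0)
    (hkb : ∃ C, ∀ x, |k x| ≤ C)
    (hkBV : BoundedVariationOn k Set.univ)
    (hkloc : LocallyIntegrable k volume)
    (hab : a' ≤ 0 ∧ 0 ≤ b')
    (hu : ∀ j, u j ∈ Set.Icc a' b')
    (hsupp : ∃ J : ℕ, ∀ j : ℤ, (J : ℤ) < |j| → u j = 0) :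
    dx * ∑' j : ℤ, u j * Dm dx (numFlux f k dx u) j
        ≥ -(sSup ((fun s => |F s|) '' Set.Icc a' b')) *
            ∑' j : ℤ, |kAvg k dx j - kAvg k dx (j - 1)| ∧
    dx * ∑' j : ℤ, u j * Dm dx (numFlux f k dx u) j
        ≥ -(sSup ((fun s => |F s|) '' Set.Icc a' b')) * totalVar k := by
  obtain ⟨J, hJ⟩ := hsupp
  set M := sSup ((fun s => |F s|) '' Set.Icc a' b') with hM
  have hFcont : Continuous F :=
    continuous_iff_continuousAt.2 fun x => (hF x).continuousAt
  have hbdd : BddAbove ((fun s => |F s|) '' Set.Icc a' b') :=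
    (isCompact_Icc.image (continuous_abs.comp hFcont)).bddAbove
  have hMmem : ∀ s ∈ Set.Icc a' b', |F s| ≤ M := fun s hs =>
    le_csSup hbdd (Set.mem_image_of_mem _ hs)
  have hM0 : 0 ≤ M := by
    have h0 := hMmem 0 ⟨hab.1, hab.2⟩
    rw [hF0] at h0
    simpa using h0
  set κ := kAvg k dx with hκdef
  set h := numFlux f k dx u with hhdef
  set S : Finset ℤ := Finset.Icc (-(J:ℤ)) J with hS
  set T : Finset ℤ := Finset.Icc (-(J:ℤ)-1) J with hT
  have hu0 : ∀ j : ℤ, j ∉ S → u j = 0 := by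
    intro j hj
    apply hJ
    simp only [hS, Finset.mem_Icc] at hj
    rw [Int.abs_eq_natAbs]
    omega
  -- the LHS as a finite sum
  have hg0 : ∀ j : ℤ, j ∉ S → u j * Dm dx (numFlux f k dx u) j = 0 := by
    intro j hj
    rw [hu0 j hj, zero_mul]
  have htsum : (∑' j : ℤ, u j * Dm dx (numFlux f k dx u) j)
      = ∑ j ∈ S, u j * Dm dx (numFlux f k dx u) j := tsum_eq_sum hg0
  have hLHS : dx * ∑' j : ℤ, u j * Dm dx (numFlux f k dx u) j
      = ∑ j ∈ S, u j * (h j - h (j-1)) := by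
    rw [htsum, Finset.mul_sum]
    refine Finset.sum_congr rfl fun j _ => ?_
    unfold Dm
    field_simp
    rfl
  -- Abel summation
  have hST : S ⊆ T := by
    intro j hj
    simp only [hS, Finset.mem_Icc] at hj
    simp only [hT, Finset.mem_Icc]
    omega
  have reindex : ∑ j ∈ S, u j * h (j-1) = ∑ j ∈ Finset.Icc (-(J:ℤ)-1) ((J:ℤ)-1), u (j+1) * h j := by
    apply Finset.sum_nbij' (i := fun j => j - 1) (j := fun j => j + 1)
    · intro j hj; simp only [hS, Finset.mem_Icc] at hj; simp only [Finset.mem_Icc]; omega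
    · intro j hj; simp only [Finset.mem_Icc] at hj; simp only [hS, Finset.mem_Icc]; omega
    · intro j _; ring
    · intro j _; ring
    · intro j _; rw [sub_add_cancel]
  have habel : ∑ j ∈ S, u j * (h j - h (j-1)) = ∑ j ∈ T, (u j - u (j+1)) * h j := by
    have e1 : ∑ j ∈ S, u j * (h j - h (j-1))
        = ∑ j ∈ S, u j * h j - ∑ j ∈ S, u j * h (j-1) := by
      rw [← Finset.sum_sub_distrib]
      exact Finset.sum_congr rfl fun j _ => by ring
    have e2 : ∑ j ∈ S, u j * h j = ∑ j ∈ T, u j * h j := by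
      apply Finset.sum_subset hST
      intro j hjT hjS
      rw [hu0 j hjS, zero_mul]
    have e3 : ∑ j ∈ Finset.Icc (-(J:ℤ)-1) ((J:ℤ)-1), u (j+1) * h j
        = ∑ j ∈ T, u (j+1) * h j := by
      apply Finset.sum_subset
      · intro j hj; simp only [Finset.mem_Icc] at hj; simp only [hT, Finset.mem_Icc]; omega
      · intro j hjT hj
        have : u (j+1) = 0 := by
          apply hu0
          simp only [Finset.mem_Icc] at hjT hj ⊢
          simp only [hS, hT, Finset.mem_Icc] at *
          omega
        rw [this, zero_mul]
    rw [e1, e2, reindex, e3, ← Finset.sum_sub_distrib]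
    exact Finset.sum_congr rfl fun j _ => by ring
  -- per-term flux inequality
  have hterm : ∀ j : ℤ, κ j * (F (u j) - F (u (j+1))) ≤ (u j - u (j+1)) * h j := by
    intro j
    have hhj : h j = κ j * signFlux f κ u j := rfl
    rcases le_or_gt 0 (κ j) with hk | hk
    · rw [hhj]
      simp only [signFlux, if_pos hk]
      have h1 : F (u j) - F (u (j+1)) ≤ (u j - u (j+1)) * eoFlux f (u j) (u (j+1)) := by
        have := flb_eo_le f F hf hF (u j) (u (j+1))
        nlinarith [this]
      nlinarith [mul_le_mul_of_nonneg_left h1 hk]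
    · rw [hhj]
      simp only [signFlux, if_neg (not_le.2 hk)]
      have h1 : (u (j+1) - u j) * eoFlux f (u (j+1)) (u j) ≥ F (u (j+1)) - F (u j) := by
        have := flb_eo_ge f F hf hF (u j) (u (j+1))
        nlinarith [this]
      nlinarith [mul_le_mul_of_nonpos_left h1 hk.le]
  -- second Abel: rewrite the lower bound sum
  have hF0j : ∀ j : ℤ, j ∉ S → F (u j) = 0 := by
    intro j hj
    rw [hu0 j hj, hF0]
  have habel2 : ∑ j ∈ T, κ j * (F (u j) - F (u (j+1)))
      = ∑ j ∈ S, (κ j - κ (j-1)) * F (u j) := by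
    have e1 : ∑ j ∈ T, κ j * (F (u j) - F (u (j+1)))
        = ∑ j ∈ T, κ j * F (u j) - ∑ j ∈ T, κ j * F (u (j+1)) := by
      rw [← Finset.sum_sub_distrib]
      exact Finset.sum_congr rfl fun j _ => by ring
    have e2 : ∑ j ∈ T, κ j * F (u j) = ∑ j ∈ S, κ j * F (u j) := by
      symm
      apply Finset.sum_subset hST
      intro j _ hjS
      rw [hF0j j hjS, mul_zero]
    have e3 : ∑ j ∈ T, κ j * F (u (j+1))
        = ∑ j ∈ Finset.Icc (-(J:ℤ)) ((J:ℤ)+1), κ (j-1) * F (u j) := by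
      apply Finset.sum_nbij' (i := fun j => j + 1) (j := fun j => j - 1)
      · intro j hj; simp only [hT, Finset.mem_Icc] at hj; simp only [Finset.mem_Icc]; omega
      · intro j hj; simp only [Finset.mem_Icc] at hj; simp only [hT, Finset.mem_Icc]; omega
      · intro j _; ring
      · intro j _; ring
      · intro j _; rw [add_sub_cancel_right]
    have e4 : ∑ j ∈ Finset.Icc (-(J:ℤ)) ((J:ℤ)+1), κ (j-1) * F (u j)
        = ∑ j ∈ S, κ (j-1) * F (u j) := by
      symm
      apply Finset.sum_subset
      · intro j hj; simp only [hS, Finset.mem_Icc] at hj; simp only [Finset.mem_Icc]; omega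
      · intro j hjbig hjS
        rw [hF0j j hjS, mul_zero]
    rw [e1, e2, e3, e4, ← Finset.sum_sub_distrib]
    exact Finset.sum_congr rfl fun j _ => by ring
  -- summability of the variation of the averages
  have hq0 : ∀ j : ℤ, 0 ≤ |κ j - κ (j-1)| := fun j => abs_nonneg _
  have hqsum : Summable (fun j : ℤ => |κ j - κ (j-1)|) :=
    summable_of_sum_le hq0 (fun t => flb_sum_kavg_le hdx hkBV hkloc t)
  have hqle : ∑ j ∈ S, |κ j - κ (j-1)| ≤ ∑' j : ℤ, |κ j - κ (j-1)| :=
    Summable.sum_le_tsum S (fun j _ => hq0 j) hqsum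
  have hqtv : (∑' j : ℤ, |κ j - κ (j-1)|) ≤ totalVar k :=
    Summable.tsum_le_of_sum_le hqsum (fun t => flb_sum_kavg_le hdx hkBV hkloc t)
  -- final chain
  have hlow : ∑ j ∈ S, (κ j - κ (j-1)) * F (u j) ≥ -M * ∑ j ∈ S, |κ j - κ (j-1)| := by
    rw [ge_iff_le, Finset.mul_sum]
    apply Finset.sum_le_sum
    intro j _
    have h1 : |(κ j - κ (j-1)) * F (u j)| ≤ |κ j - κ (j-1)| * M := by
      rw [abs_mul]
      exact mul_le_mul_of_nonneg_left (hMmem (u j) (hu j)) (abs_nonneg _)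
    have h2 := neg_abs_le ((κ j - κ (j-1)) * F (u j))
    nlinarith
  have hmain : dx * ∑' j : ℤ, u j * Dm dx (numFlux f k dx u) j
      ≥ -M * ∑ j ∈ S, |κ j - κ (j-1)| := by
    rw [hLHS, habel]
    calc -M * ∑ j ∈ S, |κ j - κ (j-1)|
        ≤ ∑ j ∈ S, (κ j - κ (j-1)) * F (u j) := hlow
      _ = ∑ j ∈ T, κ j * (F (u j) - F (u (j+1))) := habel2.symm
      _ ≤ ∑ j ∈ T, (u j - u (j+1)) * h j := Finset.sum_le_sum fun j _ => hterm j
  constructor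
  · refine le_trans ?_ hmain
    have : -M * ∑' j : ℤ, |κ j - κ (j-1)| ≤ -M * ∑ j ∈ S, |κ j - κ (j-1)| :=
      mul_le_mul_of_nonpos_left hqle (by linarith)
    calc -M * ∑' j : ℤ, |kAvg k dx j - kAvg k dx (j-1)|
        = -M * ∑' j : ℤ, |κ j - κ (j-1)| := rfl
      _ ≤ -M * ∑ j ∈ S, |κ j - κ (j-1)| := this
  · refine le_trans ?_ hmain
    calc -M * totalVar k ≤ -M * ∑' j : ℤ, |κ j - κ (j-1)| :=
          mul_le_mul_of_nonpos_left hqtv (by linarith)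
      _ ≤ -M * ∑ j ∈ S, |κ j - κ (j-1)| :=
          mul_le_mul_of_nonpos_left hqle (by linarith)
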